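/- Let L be a finite-dimensional Lie algebra and let A/B and C/D be chief factors of L with A = B + C, B ∩ C = D, and C/D non-abelian. Then the set of monolithic maximal subalgebras supplementing C/D in L coincides with the set of monolithic maximal subalgebras supplementing A/B in L. -/

import Mathlib

section ChiefFactors

variable (K : Type*) (L : Type*) [Field K] [LieRing L] [LieAlgebra K L]

/-- `A/B` is a chief factor of `L`: `B` is an ideal and `A/B` is a minimal ideal of `L/B`,
i.e. `B < A` and there is no ideal strictly between `B` and `A`. -/
def IsChiefFactor (A B : LieIdeal K L) : Prop :=
  B < A ∧ ∀ C : LieIdeal K L, B < C → C ≤ A → C = A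

/-- The factor `A/B` is abelian. -/
def FactorAbelian (A B : LieIdeal K L) : Prop :=
  ∀ a ∈ A, ∀ a' ∈ A, ⁅a, a'⁆ ∈ B

/-- `M` is a maximal (proper) subalgebra of `L`. -/
def IsMaximalSubalgebra (M : LieSubalgebra K L) : Prop :=
  M ≠ ⊤ ∧ ∀ N : LieSubalgebra K L, M < N → N = ⊤

/-- `L = A + M`. -/
def SumIsTop (A : LieIdeal K L) (M : LieSubalgebra K L) : Prop :=
  ∀ x : L, ∃ a ∈ A, ∃ m ∈ M, x = a + m

/-- `M` supplements the factor `A/B` : `L = A + M` and `B ⊆ A ∩ M`. -/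
def Supplements (M : LieSubalgebra K L) (A B : LieIdeal K L) : Prop :=
  SumIsTop K L A M ∧ B ≤ A ∧ (B : Set L) ⊆ M

/-- `M` complements the factor `A/B` : `L = A + M` and `A ∩ M = B`. -/
def Complements (M : LieSubalgebra K L) (A B : LieIdeal K L) : Prop :=
  SumIsTop K L A M ∧ (A : Set L) ∩ M = B

/-- `A/B` is a supplemented chief factor (supplemented by a maximal subalgebra). -/
def SupplementedFactor (A B : LieIdeal K L) : Prop :=
  ∃ M : LieSubalgebra K L, IsMaximalSubalgebra K L M ∧ Supplements K L M A B

/-- `A/B` is a Frattini chief factor: `A/B ⊆ φ(L/B)`, equivalently `A` is contained in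
every maximal subalgebra of `L` containing `B`. -/
def FrattiniFactor (A B : LieIdeal K L) : Prop :=
  IsChiefFactor K L A B ∧
    ∀ M : LieSubalgebra K L, IsMaximalSubalgebra K L M → (B : Set L) ⊆ M → (A : Set L) ⊆ M

/-- `A/B ↘ C/D` : `A = B + C` and `B ∩ C = D`. -/
def Searrow (A B C D : LieIdeal K L) : Prop := A = B ⊔ C ∧ B ⊓ C = D

/-- `[A/B ↘ C/D]` is an m-crossing. -/
def MCrossing (A B C D : LieIdeal K L) : Prop :=
  IsChiefFactor K L A B ∧ IsChiefFactor K L C D ∧ Searrow K L A B C D ∧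
    FrattiniFactor K L A B ∧ SupplementedFactor K L C D

/-- The chief factors `A/B` and `C/D` are m-related. -/
def MRelated (A B C D : LieIdeal K L) : Prop :=
  (∃ R S, IsChiefFactor K L R S ∧ SupplementedFactor K L R S ∧
     Searrow K L R S A B ∧ Searrow K L R S C D) ∨
  (∃ U V W X, MCrossing K L U V W X ∧ Searrow K L V X A B ∧ Searrow K L W X C D) ∨
  (∃ Y Z, FrattiniFactor K L Y Z ∧ Searrow K L A B Y Z ∧ Searrow K L C D Y Z) ∨
  (∃ U V W X, MCrossing K L U V W X ∧ Searrow K L A B U V ∧ Searrow K L C D U W)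

/-- `I` is the core `M_L` of the subalgebra `M`: the largest ideal of `L` contained in `M`. -/
def IsCoreOf (I : LieIdeal K L) (M : LieSubalgebra K L) : Prop :=
  (I : Set L) ⊆ M ∧ ∀ J : LieIdeal K L, (J : Set L) ⊆ M → J ≤ I

/-- The quotient `L/I` is primitive: it has a core-free maximal subalgebra. -/
def QuotPrimitive (I : LieIdeal K L) : Prop :=
  ∃ M : LieSubalgebra K L, IsMaximalSubalgebra K L M ∧ IsCoreOf K L I M

/-- The quotient `L/I` is monolithic: it has a unique minimal ideal. -/
def QuotMonolithic (I : LieIdeal K L) : Prop :=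
  ∃! J : LieIdeal K L, IsChiefFactor K L J I

/-- `M` is a monolithic maximal subalgebra supplementing `A/B` :
`L/M_L` is a monolithic primitive Lie algebra. -/
def MonolithicSupplement (M : LieSubalgebra K L) (A B : LieIdeal K L) : Prop :=
  IsMaximalSubalgebra K L M ∧ Supplements K L M A B ∧
    ∃ I : LieIdeal K L, IsCoreOf K L I M ∧ QuotMonolithic K L I

/-- `A/B` and `C/D` are `L`-isomorphic: there is an isomorphism of `L`-modules between
the factors which moreover preserves the induced Lie brackets. -/
def LIso (A B C D : LieIdeal K L) : Prop :=
  B ≤ A ∧ D ≤ C ∧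
  ∃ e : (A ⧸ (LieSubmodule.comap (LieSubmodule.incl A) B)) ≃ₗ⁅K,L⁆
        (C ⧸ (LieSubmodule.comap (LieSubmodule.incl C) D)),
    ∀ (a a' : A) (c c' : C),
      e (LieSubmodule.Quotient.mk a) = LieSubmodule.Quotient.mk c →
      e (LieSubmodule.Quotient.mk a') = LieSubmodule.Quotient.mk c' →
      e (LieSubmodule.Quotient.mk ⟨⁅(a : L), (a' : L)⁆, A.lie_mem a'.2⟩) =
        LieSubmodule.Quotient.mk ⟨⁅(c : L), (c' : L)⁆, C.lie_mem c'.2⟩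

/-- `L/I` is a primitive Lie algebra of type 3 with (exactly two) minimal ideals
`J1/I` and `J2/I`, both non-abelian. -/
def QuotPrimitiveType3 (I J1 J2 : LieIdeal K L) : Prop :=
  QuotPrimitive K L I ∧ J1 ≠ J2 ∧ IsChiefFactor K L J1 I ∧ IsChiefFactor K L J2 I ∧
    ¬ FactorAbelian K L J1 I ∧ ¬ FactorAbelian K L J2 I ∧
    ∀ J : LieIdeal K L, IsChiefFactor K L J I → J = J1 ∨ J = J2

/-- `A/B` and `C/D` are `L`-connected. -/
def LConnected (A B C D : LieIdeal K L) : Prop :=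
  LIso K L A B C D ∨
    ∃ I J1 J2 : LieIdeal K L, QuotPrimitiveType3 K L I J1 J2 ∧
      LIso K L J1 I A B ∧ LIso K L J2 I C D

end ChiefFactors

variable {K : Type*} {L : Type*} [Field K] [LieRing L] [LieAlgebra K L]
variable [FiniteDimensional K L]

lemma exists_chief_above (I N : LieIdeal K L) (h : I < N) :
    ∃ X : LieIdeal K L, IsChiefFactor K L X I ∧ X ≤ N := by
  let S : Set (LieIdeal K L) := {X | I < X ∧ X ≤ N}
  let T : Set ℕ := (fun X : LieIdeal K L => Module.finrank K X.toSubmodule) '' S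
  have hT : T.Nonempty := ⟨_, ⟨N, ⟨h, le_rfl⟩, rfl⟩⟩
  obtain ⟨X, hXS, hXr⟩ := Nat.sInf_mem hT
  refine ⟨X, ⟨hXS.1, fun C hIC hCX => ?_⟩, hXS.2⟩
  have hCS : C ∈ S := ⟨hIC, hCX.trans hXS.2⟩
  have hXr' : Module.finrank K X.toSubmodule = sInf T := hXr
  have hle : Module.finrank K X.toSubmodule ≤ Module.finrank K C.toSubmodule := by
    rw [hXr']; exact Nat.sInf_le ⟨C, hCS, rfl⟩
  have : C.toSubmodule = X.toSubmodule :=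
    Submodule.eq_of_le_of_finrank_le ((LieSubmodule.toSubmodule_le_toSubmodule _ _).mpr hCX) hle
  exact LieSubmodule.toSubmodule_injective this

lemma chief_sup {C D : LieIdeal K L} (hCD : IsChiefFactor K L C D) (I : LieIdeal K L)
    (hDI : D ≤ I) (hCI : ¬ C ≤ I) :
    I ⊓ C = D ∧ IsChiefFactor K L (I ⊔ C) I := by
  have hDC : D ≤ C := hCD.1.le
  have h1 : I ⊓ C = D := by
    rcases (le_inf hDI hDC).lt_or_eq with hlt | heq
    · exact absurd (inf_le_left.trans_eq' (hCD.2 _ hlt inf_le_right)) hCI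
    · exact heq.symm
  refine ⟨h1, lt_of_le_of_ne le_sup_left (fun h => hCI (h ▸ le_sup_right)), fun X hIX hXle => ?_⟩
  have hX : X = I ⊔ C ⊓ X := by
    rw [← sup_inf_assoc_of_le C hIX.le, inf_eq_right.mpr hXle]
  have hDCX : D ≤ C ⊓ X := le_inf hDC (hDI.trans hIX.le)
  rcases hDCX.lt_or_eq with hlt | heq
  · rw [hX, inf_comm, hCD.2 _ (by rwa [inf_comm] at hlt) inf_le_right]
  · rw [hX, ← heq, sup_eq_left.mpr hDI] at hIX
    exact absurd rfl hIX.ne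

theorem stmt3 (A B C D : LieIdeal K L)
    (hAB : IsChiefFactor K L A B) (hCD : IsChiefFactor K L C D)
    (hsup : A = B ⊔ C) (hinf : B ⊓ C = D)
    (hna : ¬ FactorAbelian K L C D) :
    ∀ M : LieSubalgebra K L,
      MonolithicSupplement K L M C D ↔ MonolithicSupplement K L M A B := by
  intro M
  have hCA : C ≤ A := hsup ▸ le_sup_right
  have hBA : B ≤ A := hsup ▸ le_sup_left
  have hDB : D ≤ B := hinf ▸ inf_le_left
  constructor
  · rintro ⟨hmax, ⟨hsumC, hDC, hDM⟩, I, hcore, J, hJ, hJuniq⟩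
    have hDI : D ≤ I := hcore.2 D hDM
    have hCM : ¬ (C : Set L) ⊆ (M : Set L) := by
      intro hCM
      apply hmax.1
      refine eq_top_iff.mpr (fun x _ => ?_)
      obtain ⟨c, hc, m, hm, hx⟩ := hsumC x
      exact hx ▸ M.add_mem (hCM hc) hm
    have hCI : ¬ C ≤ I := fun h => hCM (fun x hx => hcore.1 (h hx))
    obtain ⟨hIC_inf, hchief⟩ := chief_sup hCD I hDI hCI
    have hJC : I ⊔ C = J := hJuniq _ hchief
    have hBM : (B : Set L) ⊆ (M : Set L) := by
      by_contra hBM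
      have hBI : ¬ B ≤ I := fun h => hBM (fun x hx => hcore.1 (h hx))
      have hIB : I < I ⊔ B := lt_of_le_of_ne le_sup_left (fun h => hBI (h ▸ le_sup_right))
      obtain ⟨X, hXchief, hXle⟩ := exists_chief_above I (I ⊔ B) hIB
      have hJleB : J ≤ I ⊔ B := (hJuniq _ hXchief) ▸ hXle
      have hbr : ⁅(I ⊔ B : LieIdeal K L), (I ⊔ C : LieIdeal K L)⁆ ≤ I := by
        rw [LieSubmodule.sup_lie, LieSubmodule.lie_sup, LieSubmodule.lie_sup]
        refine sup_le (sup_le ?_ ?_) (sup_le ?_ ?_)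
        · exact (LieSubmodule.lie_le_inf _ _).trans inf_le_left
        · exact (LieSubmodule.lie_le_inf _ _).trans inf_le_left
        · exact (LieSubmodule.lie_le_inf _ _).trans inf_le_right
        · exact ((LieSubmodule.lie_le_inf _ _).trans (hinf.le.trans hDI))
      apply hna
      intro a ha a' ha'
      have hmem1 : a ∈ I ⊔ B := hJleB (hJC ▸ (le_sup_right (a := I) ha))
      have hmem2 : a' ∈ I ⊔ C := le_sup_right (a := I) ha'
      have h2 : ⁅a, a'⁆ ∈ I := hbr (LieSubmodule.lie_mem_lie hmem1 hmem2)
      have h3 : ⁅a, a'⁆ ∈ C := C.lie_mem ha'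
      exact hIC_inf ▸ ((LieSubmodule.mem_inf _ _ _).mpr ⟨h2, h3⟩)
    refine ⟨hmax, ⟨?_, hBA, hBM⟩, I, hcore, J, hJ, hJuniq⟩
    intro x
    obtain ⟨c, hc, m, hm, hx⟩ := hsumC x
    exact ⟨c, hCA hc, m, hm, hx⟩
  · rintro ⟨hmax, ⟨hsumA, hBA', hBM⟩, hmono⟩
    refine ⟨hmax, ⟨?_, hCD.1.le, fun x hx => hBM (hDB hx)⟩, hmono⟩
    intro x
    obtain ⟨a, ha, m, hm, hx⟩ := hsumA x
    rw [hsup, LieSubmodule.mem_sup] at ha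
    obtain ⟨b, hb, c, hc, hbc⟩ := ha
    exact ⟨c, hc, b + m, M.add_mem (hBM hb) hm, by rw [hx, ← hbc]; abel⟩
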